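/- Let X be a real normed vector space and K ⊆ X a closed, convex, pointed cone with nonempty interior. Suppose A, B, C ⊆ X are nonempty, weakly K-compact, K-convex sets. Then: (i) if A + C + int K = C + B + int K, then A + int K = B + int K; (ii) e(A + int K, B + int K) = e(A + C + int K, B + C + int K). -/

import Mathlib

open Set Filter Topology Metric Pointwise
open scoped ENNReal

/-- A set is weakly open if it is open in the weak topology σ(X, X*). -/
def WeaklyOpen {X : Type*} [NormedAddCommGroup X] [NormedSpace ℝ X] (U : Set X) : Prop :=
  IsOpen ((toWeakSpace ℝ X) '' U)

/-- `S` is weakly `K`-compact: every cover of `S` by sets `U + K` with `U` weakly open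
admits a finite subcover. -/
def WeaklyKCompact {X : Type*} [NormedAddCommGroup X] [NormedSpace ℝ X] (K S : Set X) : Prop :=
  ∀ {ι : Type*} (U : ι → Set X), (∀ i, WeaklyOpen (U i)) → S ⊆ ⋃ i, (U i + K) →
    ∃ t : Finset ι, S ⊆ ⋃ i ∈ t, (U i + K)

/-- The excess `e(A, B) = sup_{x ∈ A} d(x, B)`, valued in `[0, ∞]`. -/
noncomputable def excess {Y : Type*} [SeminormedAddCommGroup Y] (A B : Set Y) : ℝ≥0∞ :=
  ⨆ x ∈ A, EMetric.infEdist x B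

namespace Cor24Aux

variable {X : Type*} [NormedAddCommGroup X] [NormedSpace ℝ X] {K : Set X}

/-- helper: a real inequality in the limit. -/
lemma le_of_forall_eps {c d fe : ℝ} (hfe : fe < 0) (h : ∀ ε : ℝ, 0 < ε → c + ε * fe < d) :
    c ≤ d := by
  by_contra hcd
  push_neg at hcd
  have hε : 0 < (c - d) / (-fe) := div_pos (by linarith) (by linarith)
  have h2 := h _ hε
  have h3 : (c - d) / (-fe) * fe = d - c := by
    rw [div_mul_eq_mul_div, div_eq_iff (by linarith : -fe ≠ 0)]
    ring
  linarith

lemma wkc_bddAbove.{u} (h0K : (0 : X) ∈ K) {S : Set X} (hS : WeaklyKCompact.{_, u} K S)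
    (f : X →L[ℝ] ℝ) (hf : ∀ k ∈ K, f k ≤ 0) : BddAbove (f '' S) := by
  set U : ULift.{u} ℕ → Set X := fun n => f ⁻¹' Iio (n.down : ℝ) with hU_def
  have hU : ∀ n, WeaklyOpen (U n) := by
    intro n
    have hc : Continuous fun x : WeakSpace ℝ X => f ((toWeakSpace ℝ X).symm x) :=
      WeakBilin.eval_continuous ((topDualPairing ℝ X).flip) f
    have himg : (toWeakSpace ℝ X) '' (U n)
        = (fun x : WeakSpace ℝ X => f ((toWeakSpace ℝ X).symm x)) ⁻¹' Iio (n.down : ℝ) := by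
      ext x
      constructor
      · rintro ⟨y, hy, rfl⟩; simpa [hU_def] using hy
      · intro hx; exact ⟨(toWeakSpace ℝ X).symm x, hx, by simp⟩
    have : IsOpen ((toWeakSpace ℝ X) '' (U n)) := by
      rw [himg]; exact hc.isOpen_preimage _ isOpen_Iio
    exact this
  have hcov : S ⊆ ⋃ n, (U n + K) := by
    intro x hx
    obtain ⟨n, hn⟩ := exists_nat_gt (f x)
    exact mem_iUnion.2 ⟨⟨n⟩, ⟨x, hn, 0, h0K, add_zero x⟩⟩
  obtain ⟨t, ht⟩ := hS U hU hcov
  refine ⟨((t.sup (fun n => n.down) : ℕ) : ℝ), ?_⟩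
  rintro y ⟨x, hx, rfl⟩
  obtain ⟨n, hnt, hxn⟩ := mem_iUnion₂.1 (ht hx)
  obtain ⟨u, hu, k, hk, rfl⟩ := hxn
  have h1 : f u < n.down := hu
  have h2 : f k ≤ 0 := hf k hk
  have h3 : ((n.down : ℕ) : ℝ) ≤ ((t.sup (fun n => n.down) : ℕ) : ℝ) := by
    exact_mod_cast Finset.le_sup (f := fun n : ULift.{u} ℕ => n.down) hnt
  calc f (u + k) = f u + f k := map_add f u k
    _ ≤ ((n.down : ℕ) : ℝ) := by linarith
    _ ≤ _ := h3

lemma smul_mem_interior (hK_cone : ∀ t : ℝ, 0 ≤ t → ∀ x ∈ K, t • x ∈ K)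
    {t : ℝ} (ht : 0 < t) {x : X} (hx : x ∈ interior K) : t • x ∈ interior K := by
  have hsub : (fun y : X => t • y) '' interior K ⊆ K := by
    rintro y ⟨k, hk, rfl⟩
    exact hK_cone t ht.le k (interior_subset hk)
  have hopen : IsOpen ((fun y : X => t • y) '' interior K) :=
    (isOpenMap_smul₀ ht.ne') _ isOpen_interior
  exact interior_maximal hsub hopen ⟨x, hx, rfl⟩

lemma intK_add_K (hK_add : K + K ⊆ K) : interior K + K ⊆ interior K :=
  interior_maximal ((add_subset_add_right interior_subset).trans hK_add)
    isOpen_interior.add_right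

lemma sup0_intK (hK_cone : ∀ t : ℝ, 0 ≤ t → ∀ x ∈ K, t • x ∈ K)
    (hK_solid : (interior K).Nonempty) (f : X →L[ℝ] ℝ) (hf : ∀ k ∈ K, f k ≤ 0) :
    sSup (f '' interior K) = 0 := by
  obtain ⟨e, he⟩ := hK_solid
  have hb : BddAbove (f '' interior K) := by
    refine ⟨0, ?_⟩
    rintro y ⟨k, hk, rfl⟩
    exact hf k (interior_subset hk)
  apply le_antisymm
  · exact csSup_le (Set.Nonempty.image f ⟨e, he⟩)
      (by rintro y ⟨k, hk, rfl⟩; exact hf k (interior_subset hk))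
  · have key : ∀ δ : ℝ, 0 < δ → δ * f e ≤ sSup (f '' interior K) := by
      intro δ hδ
      have hmem : δ • e ∈ interior K := smul_mem_interior hK_cone hδ he
      have : f (δ • e) = δ * f e := by rw [map_smul]; rfl
      exact this ▸ le_csSup hb ⟨δ • e, hmem, rfl⟩
    have hfe : f e ≤ 0 := hf e (interior_subset he)
    rcases eq_or_lt_of_le hfe with h | h
    · have := key 1 one_pos
      simpa [← h] using this
    · by_contra hneg
      push_neg at hneg
      have hδ : 0 < sSup (f '' interior K) / (2 * f e) :=
        div_pos_of_neg_of_neg hneg (by linarith)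
      have h2 := key _ hδ
      have h3 : sSup (f '' interior K) / (2 * f e) * f e = sSup (f '' interior K) / 2 := by
        rw [div_mul_eq_mul_div, mul_comm (2:ℝ) (f e), ← div_div,
          mul_div_assoc, div_self h.ne, mul_one]
      rw [h3] at h2
      linarith

/-- A nonzero negative functional is strictly negative on the interior of `K`. -/
lemma neg_on_intK {f : X →L[ℝ] ℝ} (hfne : f ≠ 0) (hf : ∀ k ∈ K, f k ≤ 0)
    {e : X} (he : e ∈ interior K) : f e < 0 := by
  obtain ⟨r, hr, hball⟩ := Metric.mem_nhds_iff.1 (mem_interior_iff_mem_nhds.1 he)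
  obtain ⟨v, hv⟩ := DFunLike.ne_iff.1 hfne
  simp only [ContinuousLinearMap.zero_apply] at hv
  set w : X := (f v)⁻¹ • v with hw_def
  have hfw : f w = 1 := by rw [hw_def, map_smul, smul_eq_mul, inv_mul_cancel₀ hv]
  set δ : ℝ := r / (2 * (‖w‖ + 1)) with hδ_def
  have hδ : 0 < δ := by positivity
  have hmem : e + δ • w ∈ K := by
    apply hball
    rw [mem_ball, dist_eq_norm, add_sub_cancel_left, norm_smul, Real.norm_eq_abs,
      abs_of_pos hδ]
    have h1 : δ * ‖w‖ < δ * (‖w‖ + 1) := by nlinarith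
    have h2 : δ * (‖w‖ + 1) = r / 2 := by rw [hδ_def]; field_simp
    linarith
  have := hf _ hmem
  rw [map_add, map_smul, smul_eq_mul, hfw, mul_one] at this
  linarith

lemma sSup_smul_image {c : ℝ} (hc : 0 < c) (f : X →L[ℝ] ℝ) {S : Set X}
    (hSne : S.Nonempty) (hb : BddAbove (f '' S)) :
    sSup ((c • f) '' S) = c * sSup (f '' S) := by
  have h1 : (c • f) '' S = (OrderIso.mulLeft₀ c hc) '' (f '' S) := by
    rw [← image_comp]
    apply image_congr
    intro x _
    simp [ContinuousLinearMap.smul_apply]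
  rw [h1, ← ((OrderIso.mulLeft₀ c hc).map_csSup' (hSne.image f) hb)]
  simp

lemma BintK_eq (hK_add : K + K ⊆ K) (h0K : (0:X) ∈ K) (B : Set X) :
    B + interior K = (B + K) + interior K := by
  apply Subset.antisymm
  · exact add_subset_add_right (fun b hb => ⟨b, hb, 0, h0K, add_zero b⟩)
  · rw [add_assoc]
    exact add_subset_add_left
      (by rw [add_comm K (interior K)]; exact intK_add_K hK_add)

lemma subset_of_sup_le
    (hK_conv : Convex ℝ K)
    (hK_cone : ∀ t : ℝ, 0 ≤ t → ∀ x ∈ K, t • x ∈ K)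
    (hK_add : K + K ⊆ K)
    (h0K : (0:X) ∈ K)
    {A B : Set X} (hBne : B.Nonempty)
    (hbA : ∀ f : X →L[ℝ] ℝ, (∀ k ∈ K, f k ≤ 0) → BddAbove (f '' A))
    (hBconv : Convex ℝ (B + K))
    (hle : ∀ f : X →L[ℝ] ℝ, (∀ k ∈ K, f k ≤ 0) → sSup (f '' A) ≤ sSup (f '' B)) :
    A + interior K ⊆ B + interior K := by
  have hconv : Convex ℝ (B + interior K) := by
    rw [BintK_eq hK_add h0K]
    exact hBconv.add hK_conv.interior
  have hopen : IsOpen (B + interior K) := isOpen_interior.add_left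
  rintro x ⟨a, ha, e, he, rfl⟩
  by_contra hx
  obtain ⟨f, hf⟩ := geometric_hahn_banach_open_point hconv hopen hx
  obtain ⟨b₀, hb₀⟩ := hBne
  -- f is nonpositive on K
  have hfP : ∀ k ∈ K, f k ≤ 0 := by
    intro k hk
    by_contra hpos
    push_neg at hpos
    have h1 : ∀ t : ℝ, 0 < t → f b₀ + (f e + t * f k) < f (a + e) := by
      intro t ht
      have hmem : b₀ + (e + t • k) ∈ B + interior K :=
        ⟨b₀, hb₀, e + t • k,
          intK_add_K hK_add ⟨e, he, t • k, hK_cone t ht.le k hk, rfl⟩, rfl⟩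
      simpa [map_add, map_smul, smul_eq_mul] using hf _ hmem
    set c := f (a + e) - f b₀ - f e with hc_def
    have hc : 0 < c := by have := h1 1 one_pos; simp only [hc_def]; linarith
    have h2 := h1 ((c + 1) / f k) (div_pos (by linarith) hpos)
    have h3 : (c + 1) / f k * f k = c + 1 := div_mul_cancel₀ _ hpos.ne'
    rw [h3] at h2
    simp only [hc_def] at h2
    linarith
  have hfne : f ≠ 0 := by
    rintro rfl
    exact absurd (hf (b₀ + e) ⟨b₀, hb₀, e, he, rfl⟩) (lt_irrefl 0)
  have hfe : f e < 0 := neg_on_intK hfne hfP he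
  -- sSup (f '' B) ≤ f (a + e)
  have hsupB : sSup (f '' B) ≤ f (a + e) := by
    apply csSup_le (Set.Nonempty.image f ⟨b₀, hb₀⟩)
    rintro y ⟨b, hb, rfl⟩
    apply le_of_forall_eps hfe
    intro ε hε
    have hmem : b + ε • e ∈ B + interior K :=
      ⟨b, hb, ε • e, smul_mem_interior hK_cone hε he, rfl⟩
    simpa [map_add, map_smul, smul_eq_mul] using hf _ hmem
  have hfa : f a ≤ sSup (f '' A) := le_csSup (hbA f hfP) ⟨a, ha, rfl⟩
  have hchain := hle f hfP
  have : f (a + e) = f a + f e := map_add f a e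
  linarith

/-- Dual formula for the excess between `S + interior K` and `T + interior K`. -/
lemma excess_eq
    (hK_conv : Convex ℝ K)
    (hK_cone : ∀ t : ℝ, 0 ≤ t → ∀ x ∈ K, t • x ∈ K)
    (hK_add : K + K ⊆ K)
    (h0K : (0:X) ∈ K)
    (hK_solid : (interior K).Nonempty)
    {S T : Set X} (hSne : S.Nonempty) (hTne : T.Nonempty)
    (hbS : ∀ f : X →L[ℝ] ℝ, (∀ k ∈ K, f k ≤ 0) → BddAbove (f '' S))
    (hbT : ∀ f : X →L[ℝ] ℝ, (∀ k ∈ K, f k ≤ 0) → BddAbove (f '' T))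
    (hTconv : Convex ℝ (T + K)) :
    excess (S + interior K) (T + interior K)
      = ⨆ (f : X →L[ℝ] ℝ) (_ : (∀ k ∈ K, f k ≤ 0) ∧ ‖f‖ ≤ 1),
          ENNReal.ofReal (sSup (f '' S) - sSup (f '' T)) := by
  obtain ⟨e₁, he₁⟩ := hK_solid
  obtain ⟨t₀, ht₀⟩ := hTne
  have hVmem : t₀ + e₁ ∈ T + interior K := ⟨t₀, ht₀, e₁, he₁, rfl⟩
  have hVopen : IsOpen (T + interior K) := isOpen_interior.add_left
  have hVconv : Convex ℝ (T + interior K) := by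
    rw [BintK_eq hK_add h0K]
    exact hTconv.add hK_conv.interior
  apply le_antisymm
  · -- excess ≤ dual sup
    apply iSup₂_le
    rintro x ⟨s, hs, e, he, rfl⟩
    by_contra hcon
    push_neg at hcon
    obtain ⟨r, hr0, hr1, hr2⟩ := ENNReal.lt_iff_exists_real_btwn.1 hcon
    have hrpos : 0 < r := by
      rcases lt_or_ge 0 r with h | h
      · exact h
      · exfalso
        have : ENNReal.ofReal r = 0 := ENNReal.ofReal_eq_zero.2 h
        rw [this] at hr1
        exact absurd hr1 (not_lt.2 zero_le)
    set x := s + e with hx_def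
    have hdisj : Disjoint (T + interior K) (ball x r) := by
      rw [Set.disjoint_right]
      intro y hy hyV
      have h1 : EMetric.infEdist x (T + interior K) ≤ edist x y :=
        EMetric.infEdist_le_edist_of_mem hyV
      have h2 : edist x y < ENNReal.ofReal r := by
        rw [edist_dist]
        exact ENNReal.ofReal_lt_ofReal_iff hrpos |>.2 (by rwa [dist_comm, ← mem_ball])
      exact absurd (h1.trans_lt h2) (not_lt.2 hr2.le)
    obtain ⟨f, u, hfV, hfball⟩ :=
      geometric_hahn_banach_open_open hVconv hVopen (convex_ball x r) isOpen_ball hdisj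
    have hxball : x ∈ ball x r := mem_ball_self hrpos
    have hDpos : 0 < f x - u := sub_pos.2 (hfball x hxball)
    -- f is nonpositive on K
    have hfP : ∀ k ∈ K, f k ≤ 0 := by
      intro k hk
      by_contra hpos
      push_neg at hpos
      have h1 : ∀ t : ℝ, 0 < t → f t₀ + (f e₁ + t * f k) < u := by
        intro t ht
        have hmem : t₀ + (e₁ + t • k) ∈ T + interior K :=
          ⟨t₀, ht₀, e₁ + t • k,
            intK_add_K hK_add ⟨e₁, he₁, t • k, hK_cone t ht.le k hk, rfl⟩, rfl⟩
        simpa [map_add, map_smul, smul_eq_mul] using hfV _ hmem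
      set c := u - f t₀ - f e₁ with hc_def
      have hc : 0 < c := by have := h1 1 one_pos; simp only [hc_def]; linarith
      have h2 := h1 ((c + 1) / f k) (div_pos (by linarith) hpos)
      have h3 : (c + 1) / f k * f k = c + 1 := div_mul_cancel₀ _ hpos.ne'
      rw [h3] at h2
      simp only [hc_def] at h2
      linarith
    have hfne : f ≠ 0 := by
      rintro rfl
      have h1 := hfV _ hVmem
      have h2 := hfball x hxball
      simp at h1 h2
      linarith
    have hf0 : 0 < ‖f‖ := norm_pos_iff.2 hfne
    -- |f w| ≤ f x - u on ball 0 r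
    have hball2 : ∀ w : X, ‖w‖ < r → |f w| ≤ f x - u := by
      intro w hw
      have hmem : ∀ w' : X, ‖w'‖ < r → x + w' ∈ ball x r := by
        intro w' hw'
        rw [mem_ball, dist_eq_norm, add_sub_cancel_left]
        exact hw'
      have h1 := hfball _ (hmem w hw)
      have h2 := hfball _ (hmem (-w) (by rwa [norm_neg]))
      rw [map_add] at h1
      rw [map_add, map_neg] at h2
      rw [abs_le]
      constructor <;> linarith
    -- operator norm bound : ‖f‖ * r ≤ f x - u
    have hnorm : ‖f‖ * r ≤ f x - u := by
      by_contra h'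
      push_neg at h'
      have hdr : (f x - u) / ‖f‖ < r := (div_lt_iff₀ hf0).2 (by linarith [mul_comm ‖f‖ r])
      set r' := ((f x - u) / ‖f‖ + r) / 2 with hr'_def
      have hr'pos : 0 < r' := by
        have : 0 < (f x - u) / ‖f‖ := div_pos hDpos hf0
        simp only [hr'_def]; linarith
      have hr'lt : r' < r := by simp only [hr'_def]; linarith
      have hr'gt : (f x - u) / ‖f‖ < r' := by simp only [hr'_def]; linarith
      have hb' : ‖f‖ ≤ (f x - u) / r' := by
        apply ContinuousLinearMap.opNorm_le_bound _ (by positivity)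
        intro z
        rcases eq_or_ne z 0 with rfl | hz
        · simp
        · have hzn : 0 < ‖z‖ := norm_pos_iff.2 hz
          have hw := hball2 ((r' / ‖z‖) • z)
            (by rw [norm_smul, Real.norm_eq_abs, abs_of_pos (div_pos hr'pos hzn),
                  div_mul_cancel₀ _ hzn.ne']; exact hr'lt)
          rw [map_smul, smul_eq_mul, abs_mul, abs_of_pos (div_pos hr'pos hzn)] at hw
          have h3 : r' * |f z| ≤ (f x - u) * ‖z‖ := by
            calc r' * |f z| = (r' / ‖z‖ * |f z|) * ‖z‖ := by field_simp
              _ ≤ (f x - u) * ‖z‖ := mul_le_mul_of_nonneg_right hw hzn.le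
          rw [Real.norm_eq_abs, div_mul_eq_mul_div, le_div_iff₀ hr'pos]
          calc |f z| * r' = r' * |f z| := mul_comm _ _
            _ ≤ (f x - u) * ‖z‖ := h3
      have h4 : ‖f‖ * r' ≤ f x - u := (le_div_iff₀ hr'pos).1 hb'
      have h5 : f x - u < r' * ‖f‖ := (div_lt_iff₀ hf0).1 hr'gt
      linarith [mul_comm ‖f‖ r']
    have hfe₁ : f e₁ < 0 := neg_on_intK hfne hfP he₁
    -- sSup (f '' T) ≤ u
    have hsupT : sSup (f '' T) ≤ u := by
      apply csSup_le (Set.Nonempty.image f ⟨t₀, ht₀⟩)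
      rintro y ⟨z, hz, rfl⟩
      apply le_of_forall_eps hfe₁
      intro ε hε
      have hmem : z + ε • e₁ ∈ T + interior K :=
        ⟨z, hz, ε • e₁, smul_mem_interior hK_cone hε he₁, rfl⟩
      simpa [map_add, map_smul, smul_eq_mul] using hfV _ hmem
    -- f x ≤ sSup (f '' S)
    have hsupS : f x ≤ sSup (f '' S) := by
      have h1 : f s ≤ sSup (f '' S) := le_csSup (hbS f hfP) ⟨s, hs, rfl⟩
      have h2 : f e ≤ 0 := hfP e (interior_subset he)
      have : f x = f s + f e := map_add f s e
      linarith
    -- normalize and contradict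
    set g : X →L[ℝ] ℝ := ‖f‖⁻¹ • f with hg_def
    have hgP : ∀ k ∈ K, g k ≤ 0 := by
      intro k hk
      have : g k = ‖f‖⁻¹ * f k := rfl
      rw [this]
      exact mul_nonpos_of_nonneg_of_nonpos (inv_nonneg.2 hf0.le) (hfP k hk)
    have hg1 : ‖g‖ ≤ 1 := by
      apply ContinuousLinearMap.opNorm_le_bound _ zero_le_one
      intro z
      have hgz : g z = ‖f‖⁻¹ * f z := rfl
      rw [hgz, Real.norm_eq_abs, abs_mul, abs_of_pos (inv_pos.2 hf0), one_mul]
      calc ‖f‖⁻¹ * |f z| ≤ ‖f‖⁻¹ * (‖f‖ * ‖z‖) :=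
          mul_le_mul_of_nonneg_left (f.le_opNorm z) (inv_nonneg.2 hf0.le)
        _ = ‖z‖ := by field_simp
    have hgS : sSup (g '' S) = ‖f‖⁻¹ * sSup (f '' S) :=
      sSup_smul_image (inv_pos.2 hf0) f hSne (hbS f hfP)
    have hgT : sSup (g '' T) = ‖f‖⁻¹ * sSup (f '' T) :=
      sSup_smul_image (inv_pos.2 hf0) f ⟨t₀, ht₀⟩ (hbT f hfP)
    have hkey : r ≤ sSup (g '' S) - sSup (g '' T) := by
      rw [hgS, hgT, ← mul_sub]
      have h1 : ‖f‖ * r ≤ sSup (f '' S) - sSup (f '' T) := by linarith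
      calc r = ‖f‖⁻¹ * (‖f‖ * r) := by field_simp
        _ ≤ ‖f‖⁻¹ * (sSup (f '' S) - sSup (f '' T)) :=
            mul_le_mul_of_nonneg_left h1 (inv_nonneg.2 hf0.le)
    have hterm : ENNReal.ofReal r
        ≤ ⨆ (f : X →L[ℝ] ℝ) (_ : (∀ k ∈ K, f k ≤ 0) ∧ ‖f‖ ≤ 1),
            ENNReal.ofReal (sSup (f '' S) - sSup (f '' T)) := by
      refine le_trans (ENNReal.ofReal_le_ofReal hkey) ?_
      exact le_iSup₂ (f := fun (f : X →L[ℝ] ℝ) (_ : (∀ k ∈ K, f k ≤ 0) ∧ ‖f‖ ≤ 1) =>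
        ENNReal.ofReal (sSup (f '' S) - sSup (f '' T))) g ⟨hgP, hg1⟩
    exact absurd (hr1.trans_le hterm) (lt_irrefl _)
  · -- dual sup ≤ excess
    apply iSup₂_le
    rintro f ⟨hfP, hf1⟩
    rcases le_or_gt (sSup (f '' S)) (sSup (f '' T)) with hle | hlt
    · rw [ENNReal.ofReal_eq_zero.2 (by linarith)]
      exact zero_le
    have key : ∀ ε : ℝ, 0 < ε →
        ENNReal.ofReal (sSup (f '' S) - sSup (f '' T) - 2 * ε)
          ≤ excess (S + interior K) (T + interior K) := by
      intro ε hε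
      obtain ⟨y, hy, hys⟩ := exists_lt_of_lt_csSup (hSne.image f)
        (sub_lt_self (sSup (f '' S)) hε)
      obtain ⟨s, hs, rfl⟩ := hy
      set δ : ℝ := ε / (‖e₁‖ + 1) with hδ_def
      have hδ : 0 < δ := by positivity
      have hxmem : s + δ • e₁ ∈ S + interior K :=
        ⟨s, hs, δ • e₁, smul_mem_interior hK_cone hδ he₁, rfl⟩
      set x := s + δ • e₁ with hx_def
      have hfx : sSup (f '' S) - 2 * ε ≤ f x := by
        have h1 : |f e₁| ≤ ‖e₁‖ := by
          calc |f e₁| ≤ ‖f‖ * ‖e₁‖ := f.le_opNorm e₁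
            _ ≤ 1 * ‖e₁‖ := mul_le_mul_of_nonneg_right hf1 (norm_nonneg _)
            _ = ‖e₁‖ := one_mul _
        have h2 : δ * ‖e₁‖ < ε := by
          rw [hδ_def, div_mul_eq_mul_div, div_lt_iff₀ (by positivity)]
          nlinarith [norm_nonneg e₁]
        have h3 : -ε ≤ δ * f e₁ := by nlinarith [neg_abs_le (f e₁), abs_nonneg (f e₁)]
        have : f x = f s + δ * f e₁ := by rw [hx_def, map_add, map_smul]; rfl
        linarith
      have hfT : ∀ y ∈ T + interior K, f y ≤ sSup (f '' T) := by
        rintro y ⟨z, hz, e', he', rfl⟩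
        have h1 : f z ≤ sSup (f '' T) := le_csSup (hbT f hfP) ⟨z, hz, rfl⟩
        have h2 : f e' ≤ 0 := hfP e' (interior_subset he')
        rw [map_add]
        linarith
      have hinf : ENNReal.ofReal (sSup (f '' S) - sSup (f '' T) - 2 * ε)
          ≤ EMetric.infEdist x (T + interior K) := by
        refine EMetric.le_infEdist.2 ?_
        intro y hy
        rw [edist_dist]
        apply ENNReal.ofReal_le_ofReal
        have h1 : f x - f y ≤ dist x y := by
          have h2 : |f (x - y)| ≤ ‖f‖ * ‖x - y‖ := f.le_opNorm _
          have h3 : ‖f‖ * ‖x - y‖ ≤ ‖x - y‖ := by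
            calc ‖f‖ * ‖x - y‖ ≤ 1 * ‖x - y‖ :=
              mul_le_mul_of_nonneg_right hf1 (norm_nonneg _)
              _ = ‖x - y‖ := one_mul _
          have h4 : f (x - y) ≤ |f (x - y)| := le_abs_self _
          rw [map_sub] at h4 h2
          rw [dist_eq_norm]
          linarith
        have h5 := hfT y hy
        linarith
      calc ENNReal.ofReal (sSup (f '' S) - sSup (f '' T) - 2 * ε)
          ≤ EMetric.infEdist x (T + interior K) := hinf
        _ ≤ excess (S + interior K) (T + interior K) :=
            le_iSup₂ (f := fun y (_ : y ∈ S + interior K) =>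
              EMetric.infEdist y (T + interior K)) x hxmem
    rcases eq_top_or_lt_top (excess (S + interior K) (T + interior K)) with htop | hlt'
    · rw [htop]; exact le_top
    apply ENNReal.le_of_forall_pos_le_add
    intro ε' hε' _
    have h1 := key (ε' / 2) (by positivity)
    have h2 : ENNReal.ofReal (sSup (f '' S) - sSup (f '' T))
        ≤ ENNReal.ofReal (sSup (f '' S) - sSup (f '' T) - 2 * (ε' / 2))
          + ENNReal.ofReal (ε' : ℝ) := by
      have := ENNReal.ofReal_add_le
        (p := sSup (f '' S) - sSup (f '' T) - 2 * ((ε' : ℝ) / 2)) (q := (ε' : ℝ))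
      have heq : (sSup (f '' S) - sSup (f '' T) - 2 * ((ε' : ℝ) / 2)) + (ε' : ℝ)
          = sSup (f '' S) - sSup (f '' T) := by ring
      rw [heq] at this
      exact this
    rw [ENNReal.ofReal_coe_nnreal] at h2
    exact h2.trans (add_le_add_left h1 _)

end Cor24Aux

/-- Cancellation and excess invariance for weakly `K`-compact, `K`-convex sets
(Corollary 24). -/
theorem cancellation_and_excess_int_K {X : Type*} [NormedAddCommGroup X] [NormedSpace ℝ X]
    (K A B C : Set X)
    (hK_closed : IsClosed K) (hK_conv : Convex ℝ K)
    (hK_cone : ∀ t : ℝ, 0 ≤ t → ∀ x ∈ K, t • x ∈ K)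
    (hK_add : K + K ⊆ K) (hK_pointed : K ∩ (-K) = {0})
    (hK_solid : (interior K).Nonempty)
    (hA : A.Nonempty) (hB : B.Nonempty) (hC : C.Nonempty)
    (hAcomp : WeaklyKCompact K A) (hBcomp : WeaklyKCompact K B) (hCcomp : WeaklyKCompact K C)
    (hAconv : Convex ℝ (A + K)) (hBconv : Convex ℝ (B + K)) (hCconv : Convex ℝ (C + K)) :
    (A + C + interior K = C + B + interior K → A + interior K = B + interior K) ∧
    excess (A + interior K) (B + interior K)
      = excess (A + C + interior K) (B + C + interior K) := by
  have h0K : (0 : X) ∈ K := by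
    obtain ⟨e, he⟩ := hK_solid
    simpa using hK_cone 0 le_rfl e (interior_subset he)
  have bddA : ∀ f : X →L[ℝ] ℝ, (∀ k ∈ K, f k ≤ 0) → BddAbove (f '' A) :=
    fun f hf => Cor24Aux.wkc_bddAbove h0K hAcomp f hf
  have bddB : ∀ f : X →L[ℝ] ℝ, (∀ k ∈ K, f k ≤ 0) → BddAbove (f '' B) :=
    fun f hf => Cor24Aux.wkc_bddAbove h0K hBcomp f hf
  have bddC : ∀ f : X →L[ℝ] ℝ, (∀ k ∈ K, f k ≤ 0) → BddAbove (f '' C) :=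
    fun f hf => Cor24Aux.wkc_bddAbove h0K hCcomp f hf
  have bddIntK : ∀ f : X →L[ℝ] ℝ, (∀ k ∈ K, f k ≤ 0) → BddAbove (f '' interior K) := by
    intro f hf
    exact ⟨0, by rintro y ⟨k, hk, rfl⟩; exact hf k (interior_subset hk)⟩
  -- sums
  have bddAC : ∀ f : X →L[ℝ] ℝ, (∀ k ∈ K, f k ≤ 0) → BddAbove (f '' (A + C)) := by
    intro f hf; rw [Set.image_add]; exact (bddA f hf).add (bddC f hf)
  have bddBC : ∀ f : X →L[ℝ] ℝ, (∀ k ∈ K, f k ≤ 0) → BddAbove (f '' (B + C)) := by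
    intro f hf; rw [Set.image_add]; exact (bddB f hf).add (bddC f hf)
  have supAC : ∀ f : X →L[ℝ] ℝ, (∀ k ∈ K, f k ≤ 0) →
      sSup (f '' (A + C)) = sSup (f '' A) + sSup (f '' C) := by
    intro f hf
    rw [Set.image_add, csSup_add (hA.image f) (bddA f hf) (hC.image f) (bddC f hf)]
  have supBC : ∀ f : X →L[ℝ] ℝ, (∀ k ∈ K, f k ≤ 0) →
      sSup (f '' (B + C)) = sSup (f '' B) + sSup (f '' C) := by
    intro f hf
    rw [Set.image_add, csSup_add (hB.image f) (bddB f hf) (hC.image f) (bddC f hf)]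
  have conv_sum : ∀ (S T : Set X), Convex ℝ (S + K) → Convex ℝ (T + K) →
      Convex ℝ ((S + T) + K) := by
    intro S T hS hT
    have heq : (S + T) + K = (S + K) + (T + K) := by
      apply Subset.antisymm
      · rintro x ⟨y, ⟨a, ha, c, hc, rfl⟩, k, hk, rfl⟩
        exact ⟨a + k, ⟨a, ha, k, hk, rfl⟩, c, ⟨c, hc, 0, h0K, add_zero c⟩, by beta_reduce; abel⟩
      · rintro x ⟨y, ⟨a, ha, k₁, hk₁, rfl⟩, z, ⟨c, hc, k₂, hk₂, rfl⟩, rfl⟩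
        exact ⟨a + c, ⟨a, ha, c, hc, rfl⟩, k₁ + k₂, hK_add ⟨k₁, hk₁, k₂, hk₂, rfl⟩, by beta_reduce; abel⟩
    rw [heq]
    exact hS.add hT
  constructor
  · -- cancellation
    intro h
    have hsig : ∀ f : X →L[ℝ] ℝ, (∀ k ∈ K, f k ≤ 0) →
        sSup (f '' A) = sSup (f '' B) := by
      intro f hf
      have h1 := congrArg (fun S : Set X => sSup (f '' S)) h
      have e1 : sSup (f '' (A + C + interior K))
          = sSup (f '' A) + sSup (f '' C) := by
        rw [Set.image_add,
          csSup_add ((hA.add hC).image f) (bddAC f hf) (hK_solid.image f) (bddIntK f hf),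
          Cor24Aux.sup0_intK hK_cone hK_solid f hf, add_zero, supAC f hf]
      have e2 : sSup (f '' (C + B + interior K))
          = sSup (f '' C) + sSup (f '' B) := by
        rw [Set.image_add,
          csSup_add ((hC.add hB).image f)
            (by rw [Set.image_add]; exact (bddC f hf).add (bddB f hf))
            (hK_solid.image f) (bddIntK f hf),
          Cor24Aux.sup0_intK hK_cone hK_solid f hf, add_zero, Set.image_add,
          csSup_add (hC.image f) (bddC f hf) (hB.image f) (bddB f hf)]
      rw [e1, e2] at h1
      linarith
    apply Subset.antisymm
    · exact Cor24Aux.subset_of_sup_le hK_conv hK_cone hK_add h0K hB bddA hBconv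
        (fun f hf => (hsig f hf).le)
    · exact Cor24Aux.subset_of_sup_le hK_conv hK_cone hK_add h0K hA bddB hAconv
        (fun f hf => (hsig f hf).ge)
  · -- excess invariance
    rw [Cor24Aux.excess_eq hK_conv hK_cone hK_add h0K hK_solid hA hB bddA bddB hBconv,
      Cor24Aux.excess_eq hK_conv hK_cone hK_add h0K hK_solid (hA.add hC) (hB.add hC)
        bddAC bddBC (conv_sum B C hBconv hCconv)]
    apply iSup_congr
    intro f
    apply iSup_congr
    rintro ⟨hf, -⟩
    rw [supAC f hf, supBC f hf]
    congr 1
    ring
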